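/- Let M(v) = (2π)^{−3/2} e^{−|v|²/2} and χ₀ = √M. Define the hard-sphere Boltzmann collision operator Q(F, G)(v) = ∫_{ℝ³} ∫_{S²} |(v − v_*)·ω| ( F(v′)G(v′_*) − F(v)G(v_*) ) dω dv_*, with v′ = v − [(v − v_*)·ω]ω and v′_* = v_* + [(v − v_*)·ω]ω; set Lf = M^{−1/2}[ Q(M, √M f) + Q(√M f, M) ], Γ(f, g) = M^{−1/2} Q(√M f, √M g), and Γ_*(f, g) = (Γ(f,g) + Γ(g,f))/2. Let P₀ be the L²(ℝ³)-orthogonal projection onto the span of χ₀, v₁√M, v₂√M, v₃√M, (|v|²−3)√M/√6, and P₁ = I − P₀. Then for all i, j ∈ {1, 2, 3} and all v ∈ ℝ³: Γ_*(v_i χ₀, v_j χ₀)(v) = −(1/2) L P₁(v_i v_j χ₀)(v), Γ_*(v_i χ₀, |v|² χ₀)(v) = −(1/2) L P₁(v_i |v|² χ₀)(v), and Γ_*(|v|² χ₀, |v|² χ₀)(v) = −(1/2) L P₁(|v|⁴ χ₀)(v). -/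

import Mathlib

noncomputable section

open MeasureTheory

/-- The normalized global Maxwellian `M(v) = (2π)^{−3/2} e^{−|v|²/2}` on `ℝ³`. -/
def Mx (v : EuclideanSpace ℝ (Fin 3)) : ℝ :=
  (2 * Real.pi) ^ (-(3:ℝ)/2) * Real.exp (-‖v‖^2 / 2)

/-- `χ₀ = √M`. -/
def chi0 (v : EuclideanSpace ℝ (Fin 3)) : ℂ := (Real.sqrt (Mx v) : ℝ)

/-- The surface measure on the unit sphere `S² ⊂ ℝ³`. -/
def sphMeas : Measure (Metric.sphere (0 : EuclideanSpace ℝ (Fin 3)) 1) :=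
  (volume : Measure (EuclideanSpace ℝ (Fin 3))).toSphere

/-- The hard-sphere Boltzmann collision operator
`Q(F,G)(v) = ∫∫ |(v−v_*)·ω| (F(v′)G(v′_*) − F(v)G(v_*)) dω dv_*`, with
`v′ = v − [(v−v_*)·ω]ω`, `v′_* = v_* + [(v−v_*)·ω]ω`. -/
def Qop (F G : EuclideanSpace ℝ (Fin 3) → ℂ) (v : EuclideanSpace ℝ (Fin 3)) : ℂ :=
  ∫ vs : EuclideanSpace ℝ (Fin 3),
    ∫ ω : Metric.sphere (0 : EuclideanSpace ℝ (Fin 3)) 1,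
      ((|(inner ℝ (v - vs) (ω : EuclideanSpace ℝ (Fin 3)) : ℝ)| : ℝ) : ℂ) *
        (F (v - (inner ℝ (v - vs) (ω : EuclideanSpace ℝ (Fin 3)) : ℝ) •
              (ω : EuclideanSpace ℝ (Fin 3))) *
         G (vs + (inner ℝ (v - vs) (ω : EuclideanSpace ℝ (Fin 3)) : ℝ) •
              (ω : EuclideanSpace ℝ (Fin 3)))
         - F v * G vs) ∂sphMeas

/-- The linearized collision operator `Lf = M^{−1/2}[Q(M, √M f) + Q(√M f, M)]`. -/
def Lop (f : EuclideanSpace ℝ (Fin 3) → ℂ) (v : EuclideanSpace ℝ (Fin 3)) : ℂ :=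
  ((Real.sqrt (Mx v) : ℝ) : ℂ)⁻¹ *
    (Qop (fun u => ((Mx u : ℝ) : ℂ)) (fun u => chi0 u * f u) v +
     Qop (fun u => chi0 u * f u) (fun u => ((Mx u : ℝ) : ℂ)) v)

/-- The nonlinear operator `Γ(f,g) = M^{−1/2} Q(√M f, √M g)`. -/
def Gam (f g : EuclideanSpace ℝ (Fin 3) → ℂ) (v : EuclideanSpace ℝ (Fin 3)) : ℂ :=
  ((Real.sqrt (Mx v) : ℝ) : ℂ)⁻¹ * Qop (fun u => chi0 u * f u) (fun u => chi0 u * g u) v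

/-- The symmetrization `Γ_*(f,g) = (Γ(f,g) + Γ(g,f))/2`. -/
def Gstar (f g : EuclideanSpace ℝ (Fin 3) → ℂ) (v : EuclideanSpace ℝ (Fin 3)) : ℂ :=
  (Gam f g v + Gam g f v) / 2

/-- The five basis functions `χ₀, v₁√M, v₂√M, v₃√M, (|v|²−3)√M/√6`. -/
def chiB (k : Fin 5) (v : EuclideanSpace ℝ (Fin 3)) : ℂ :=
  if k.val = 0 then chi0 v
  else if k.val = 4 then (((‖v‖^2 - 3) * Real.sqrt (Mx v) / Real.sqrt 6 : ℝ) : ℂ)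
  else ((v ⟨(k.val - 1) % 3, by omega⟩ * Real.sqrt (Mx v) : ℝ) : ℂ)

/-- The `L²(ℝ³)`-orthogonal projection `P₀` onto the span of the five collision
invariants, and `P₁ = I − P₀`. -/
def P0 (f : EuclideanSpace ℝ (Fin 3) → ℂ) (v : EuclideanSpace ℝ (Fin 3)) : ℂ :=
  ∑ k : Fin 5, (∫ u, f u * (starRingEnd ℂ) (chiB k u)) * chiB k v

def P1 (f : EuclideanSpace ℝ (Fin 3) → ℂ) (v : EuclideanSpace ℝ (Fin 3)) : ℂ :=
  f v - P0 f v

set_option maxHeartbeats 1000000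

namespace Stmt19Aux

abbrev E := EuclideanSpace ℝ (Fin 3)
abbrev S := Metric.sphere (0 : E) 1

lemma Mx_pos (v : E) : 0 < Mx v := by unfold Mx; positivity

lemma Mx_cont : Continuous Mx := by unfold Mx; fun_prop

lemma chi0_sq (u : E) : chi0 u * chi0 u = (Mx u : ℂ) := by
  unfold chi0
  rw [← Complex.ofReal_mul, Real.mul_self_sqrt (Mx_pos u).le]

def cI (v vs ω : E) : ℝ := inner ℝ (v - vs) ω
def vp (v vs ω : E) : E := v - cI v vs ω • ω
def wp (v vs ω : E) : E := vs + cI v vs ω • ω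

lemma nsq (v vs ω : E) (hω : ‖ω‖ = 1) :
    ‖vp v vs ω‖ ^ 2 + ‖wp v vs ω‖ ^ 2 = ‖v‖ ^ 2 + ‖vs‖ ^ 2 := by
  have h3 : cI v vs ω = inner ℝ v ω - inner ℝ vs ω := inner_sub_left ..
  unfold vp wp
  rw [norm_sub_sq_real, norm_add_sq_real, norm_smul, real_inner_smul_right,
    real_inner_smul_right]
  simp only [Real.norm_eq_abs, hω, mul_one, sq_abs]
  linear_combination (2 * cI v vs ω) * h3

lemma Mx_mul (v vs ω : E) (hω : ‖ω‖ = 1) :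
    Mx (vp v vs ω) * Mx (wp v vs ω) = Mx v * Mx vs := by
  have h := nsq v vs ω hω
  unfold Mx
  rw [mul_mul_mul_comm, ← Real.exp_add, mul_mul_mul_comm, ← Real.exp_add]
  congr 2
  linarith

lemma coord_add (v vs ω : E) (l : Fin 3) :
    vp v vs ω l + wp v vs ω l = v l + vs l := by
  unfold vp wp
  simp [PiLp.sub_apply, PiLp.add_apply, PiLp.smul_apply, smul_eq_mul]

lemma coordAbs (v : E) (l : Fin 3) : |v l| ≤ ‖v‖ := by
  have h : v l ^ 2 ≤ ‖v‖ ^ 2 := by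
    rw [EuclideanSpace.norm_eq, Real.sq_sqrt (by positivity)]
    calc v l ^ 2 = ‖v l‖ ^ 2 := by rw [Real.norm_eq_abs, sq_abs]
      _ ≤ ∑ k, ‖v k‖ ^ 2 :=
        Finset.single_le_sum (f := fun k => ‖v k‖ ^ 2) (fun k _ => by positivity)
          (Finset.mem_univ l)
  calc |v l| = Real.sqrt (v l ^ 2) := (Real.sqrt_sq_eq_abs _).symm
    _ ≤ Real.sqrt (‖v‖ ^ 2) := Real.sqrt_le_sqrt h
    _ = ‖v‖ := Real.sqrt_sq (norm_nonneg v)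

/-- integrand of `Qop` -/
def qint (F G : E → ℂ) (v vs : E) (ω : S) : ℂ :=
  ((|cI v vs (ω : E)| : ℝ) : ℂ) *
    (F (vp v vs (ω : E)) * G (wp v vs (ω : E)) - F v * G vs)

lemma Qop_eq (F G : E → ℂ) (v : E) :
    Qop F G v = ∫ vs, ∫ ω : S, qint F G v vs ω ∂sphMeas := rfl

/-- polynomial growth bound -/
def PB (φ : E → ℂ) (C : ℝ) : Prop := 0 ≤ C ∧ ∀ u, ‖φ u‖ ≤ C * (1 + ‖u‖^2)^2


lemma sphere_norm (ω : S) : ‖(ω : E)‖ = 1 := by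
  have := ω.2
  simpa [mem_sphere_iff_norm] using this

instance : IsFiniteMeasure sphMeas := by unfold sphMeas; infer_instance

lemma qint_bound {φ ψ : E → ℂ} {Cφ Cψ : ℝ} (hφ : PB φ Cφ) (hψ : PB ψ Cψ)
    (v vs : E) (ω : S) :
    ‖qint (fun u => ((Mx u : ℝ) : ℂ) * φ u) (fun u => ((Mx u : ℝ) : ℂ) * ψ u) v vs ω‖
      ≤ 2 * Cφ * Cψ * (Mx v * Mx vs) * ((‖v‖ + ‖vs‖) * (1 + ‖v‖^2 + ‖vs‖^2)^4) := by
  obtain ⟨hCφ, hφ⟩ := hφ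
  obtain ⟨hCψ, hψ⟩ := hψ
  have hω : ‖(ω : E)‖ = 1 := sphere_norm ω
  have hns := nsq v vs (ω : E) hω
  have hv' : ‖vp v vs (ω:E)‖^2 ≤ ‖v‖^2 + ‖vs‖^2 := by nlinarith [sq_nonneg ‖wp v vs (ω:E)‖]
  have hw' : ‖wp v vs (ω:E)‖^2 ≤ ‖v‖^2 + ‖vs‖^2 := by nlinarith [sq_nonneg ‖vp v vs (ω:E)‖]
  have hc : |cI v vs (ω:E)| ≤ ‖v‖ + ‖vs‖ := by
    calc |cI v vs (ω:E)| ≤ ‖v - vs‖ * ‖(ω:E)‖ := abs_real_inner_le_norm _ _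
      _ = ‖v - vs‖ := by rw [hω, mul_one]
      _ ≤ ‖v‖ + ‖vs‖ := norm_sub_le _ _
  set P : ℝ := 1 + ‖v‖^2 + ‖vs‖^2 with hP
  have hP1 : (0:ℝ) ≤ P := by positivity
  have bφ1 : ‖φ (vp v vs (ω:E))‖ ≤ Cφ * P^2 := by
    refine (hφ _).trans (mul_le_mul_of_nonneg_left (pow_le_pow_left₀ (by positivity) (by rw [hP]; linarith) 2) hCφ)
  have bψ1 : ‖ψ (wp v vs (ω:E))‖ ≤ Cψ * P^2 := by
    refine (hψ _).trans (mul_le_mul_of_nonneg_left (pow_le_pow_left₀ (by positivity) (by rw [hP]; linarith) 2) hCψ)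
  have bφ2 : ‖φ v‖ ≤ Cφ * P^2 := by
    refine (hφ _).trans (mul_le_mul_of_nonneg_left (pow_le_pow_left₀ (by positivity) (by rw [hP]; nlinarith [sq_nonneg ‖vs‖]) 2) hCφ)
  have bψ2 : ‖ψ vs‖ ≤ Cψ * P^2 := by
    refine (hψ _).trans (mul_le_mul_of_nonneg_left (pow_le_pow_left₀ (by positivity) (by rw [hP]; nlinarith [sq_nonneg ‖v‖]) 2) hCψ)
  have hMv' := Mx_pos (vp v vs (ω:E))
  have hMw' := Mx_pos (wp v vs (ω:E))
  have hMv := Mx_pos v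
  have hMvs := Mx_pos vs
  have hMm := Mx_mul v vs (ω:E) hω
  calc ‖qint _ _ v vs ω‖
      = |cI v vs (ω:E)| *
        ‖((Mx (vp v vs (ω:E)) : ℝ):ℂ) * φ (vp v vs (ω:E)) * (((Mx (wp v vs (ω:E)) : ℝ):ℂ) * ψ (wp v vs (ω:E)))
          - ((Mx v : ℝ):ℂ) * φ v * (((Mx vs : ℝ):ℂ) * ψ vs)‖ := by
        unfold qint
        rw [norm_mul, Complex.norm_real, Real.norm_eq_abs, abs_abs]
    _ ≤ |cI v vs (ω:E)| *
        (‖((Mx (vp v vs (ω:E)) : ℝ):ℂ) * φ (vp v vs (ω:E)) * (((Mx (wp v vs (ω:E)) : ℝ):ℂ) * ψ (wp v vs (ω:E)))‖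
          + ‖((Mx v : ℝ):ℂ) * φ v * (((Mx vs : ℝ):ℂ) * ψ vs)‖) := by
        gcongr
        exact norm_sub_le _ _
    _ = |cI v vs (ω:E)| *
        (Mx v * Mx vs * (‖φ (vp v vs (ω:E))‖ * ‖ψ (wp v vs (ω:E))‖)
          + Mx v * Mx vs * (‖φ v‖ * ‖ψ vs‖)) := by
        simp only [norm_mul, Complex.norm_real, Real.norm_eq_abs,
          abs_of_pos hMv', abs_of_pos hMw', abs_of_pos hMv, abs_of_pos hMvs]
        rw [show Mx (vp v vs (ω:E)) * ‖φ (vp v vs (ω:E))‖ * (Mx (wp v vs (ω:E)) * ‖ψ (wp v vs (ω:E))‖)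
            = (Mx (vp v vs (ω:E)) * Mx (wp v vs (ω:E))) * (‖φ (vp v vs (ω:E))‖ * ‖ψ (wp v vs (ω:E))‖) from by ring, hMm]
        ring
    _ ≤ (‖v‖ + ‖vs‖) * (Mx v * Mx vs * ((Cφ * P^2) * (Cψ * P^2)) + Mx v * Mx vs * ((Cφ * P^2) * (Cψ * P^2))) := by
        have hMM : (0:ℝ) ≤ Mx v * Mx vs := by positivity
        have h1 : ‖φ (vp v vs (ω:E))‖ * ‖ψ (wp v vs (ω:E))‖ ≤ (Cφ * P^2) * (Cψ * P^2) :=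
          mul_le_mul bφ1 bψ1 (norm_nonneg _) (by positivity)
        have h2 : ‖φ v‖ * ‖ψ vs‖ ≤ (Cφ * P^2) * (Cψ * P^2) :=
          mul_le_mul bφ2 bψ2 (norm_nonneg _) (by positivity)
        refine mul_le_mul hc (add_le_add (mul_le_mul_of_nonneg_left h1 hMM)
          (mul_le_mul_of_nonneg_left h2 hMM)) ?_ (by positivity)
        have := mul_nonneg hMM (mul_nonneg (norm_nonneg (φ (vp v vs (ω:E)))) (norm_nonneg (ψ (wp v vs (ω:E)))))
        have := mul_nonneg hMM (mul_nonneg (norm_nonneg (φ v)) (norm_nonneg (ψ vs)))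
        linarith
    _ = 2 * Cφ * Cψ * (Mx v * Mx vs) * ((‖v‖ + ‖vs‖) * P^4) := by ring


lemma qint_cont {F G : E → ℂ} (hF : Continuous F) (hG : Continuous G) (v : E) :
    Continuous (fun p : E × S => qint F G v p.1 p.2) := by
  have hsub : Continuous (fun p : E × S => (p.2 : E)) :=
    continuous_subtype_val.comp continuous_snd
  have h2 : Continuous (fun p : E × S => cI v p.1 (p.2 : E)) := by
    unfold cI
    exact Continuous.inner (continuous_const.sub continuous_fst) hsub
  have h3 : Continuous (fun p : E × S => vp v p.1 (p.2 : E)) := by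
    unfold vp
    exact continuous_const.sub (h2.smul hsub)
  have h4 : Continuous (fun p : E × S => wp v p.1 (p.2 : E)) := by
    unfold wp
    exact continuous_fst.add (h2.smul hsub)
  unfold qint
  exact (Complex.continuous_ofReal.comp h2.abs).mul
    (((hF.comp h3).mul (hG.comp h4)).sub (continuous_const.mul (hG.comp continuous_fst)))

instance : IsFiniteMeasureOnCompacts sphMeas := ⟨fun _ _ => measure_lt_top _ _⟩
instance : SFinite sphMeas := by infer_instance

lemma qint_cont_omega {F G : E → ℂ} (hF : Continuous F) (hG : Continuous G) (v vs : E) :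
    Continuous (fun ω : S => qint F G v vs ω) := by
  have hsub : Continuous (fun ω : S => (ω : E)) := continuous_subtype_val
  have h2 : Continuous (fun ω : S => cI v vs (ω : E)) := by
    unfold cI
    exact Continuous.inner continuous_const hsub
  have h3 : Continuous (fun ω : S => vp v vs (ω : E)) := by
    unfold vp
    exact continuous_const.sub (h2.smul hsub)
  have h4 : Continuous (fun ω : S => wp v vs (ω : E)) := by
    unfold wp
    exact continuous_const.add (h2.smul hsub)
  unfold qint
  exact (Complex.continuous_ofReal.comp h2.abs).mul
    (((hF.comp h3).mul (hG.comp h4)).sub continuous_const)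

lemma qint_int_sphere {F G : E → ℂ} (hF : Continuous F) (hG : Continuous G) (v vs : E) :
    Integrable (fun ω : S => qint F G v vs ω) sphMeas :=
  (qint_cont_omega hF hG v vs).integrable_of_hasCompactSupport
    (isClosed_tsupport _).isCompact

lemma meas_outer {F G : E → ℂ} (hF : Continuous F) (hG : Continuous G) (v : E) :
    AEStronglyMeasurable (fun vs => ∫ ω : S, qint F G v vs ω ∂sphMeas) volume :=
  ((qint_cont hF hG v).stronglyMeasurable.integral_prod_right').aestronglyMeasurable

lemma integrable_gaussE : Integrable (fun x : E => Real.exp (-(1/4) * ‖x‖^2)) := by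
  have h := (GaussianFourier.integrable_cexp_neg_mul_sq_norm_add (V := E) (b := (1/4:ℂ))
    (by norm_num) 0 0).norm
  refine h.congr ?_
  filter_upwards with x
  rw [Complex.norm_exp]
  norm_num
  rw [← Complex.ofReal_pow, Complex.ofReal_re]

lemma poly_exp_bound (a b : ℝ) (ha : 0 ≤ a) (hb : 0 ≤ b) (t : ℝ) (ht : 0 ≤ t) :
    (a + t) * (b + t^2)^4 * Real.exp (-t^2/2)
      ≤ ((a+1) * (b+1)^4 * 2 * 20^5) * Real.exp (-(1/4) * t^2) := by
  have h5 : 1 + t^2 ≤ 20 * Real.exp (t^2/20) := by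
    nlinarith [Real.add_one_le_exp (t^2/20)]
  have key : (a+t) * (b+t^2)^4 ≤ (a+1) * (b+1)^4 * 2 * 20^5 * Real.exp (t^2/4) := by
    have h1 : a + t ≤ (a+1) * (1+t) := by nlinarith
    have h2 : (b+t^2)^4 ≤ ((b+1) * (1+t^2))^4 :=
      pow_le_pow_left₀ (by positivity) (by nlinarith) 4
    have h4 : 1 + t ≤ 2 * (1+t^2) := by nlinarith [sq_nonneg (t-1)]
    have h6 : (1+t^2)^5 ≤ 20^5 * Real.exp (t^2/4) := by
      calc (1+t^2)^5 ≤ (20 * Real.exp (t^2/20))^5 :=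
            pow_le_pow_left₀ (by positivity) h5 5
        _ = 20^5 * Real.exp (t^2/4) := by
            rw [mul_pow, ← Real.exp_nat_mul, show ((5:ℕ):ℝ) * (t^2/20) = t^2/4 by push_cast; ring]
    calc (a+t) * (b+t^2)^4 ≤ ((a+1)*(1+t)) * (((b+1)*(1+t^2))^4) :=
          mul_le_mul h1 h2 (by positivity) (by positivity)
      _ = (a+1)*(b+1)^4 * ((1+t)*(1+t^2)^4) := by ring
      _ ≤ (a+1)*(b+1)^4 * ((2*(1+t^2))*(1+t^2)^4) := by
          refine mul_le_mul_of_nonneg_left ?_ (by positivity)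
          exact mul_le_mul_of_nonneg_right h4 (by positivity)
      _ = (a+1)*(b+1)^4 * 2 * (1+t^2)^5 := by ring
      _ ≤ (a+1)*(b+1)^4 * 2 * (20^5 * Real.exp (t^2/4)) :=
          mul_le_mul_of_nonneg_left h6 (by positivity)
      _ = (a+1)*(b+1)^4 * 2 * 20^5 * Real.exp (t^2/4) := by ring
  calc (a+t) * (b+t^2)^4 * Real.exp (-t^2/2)
      ≤ ((a+1)*(b+1)^4*2*20^5 * Real.exp (t^2/4)) * Real.exp (-t^2/2) :=
        mul_le_mul_of_nonneg_right key (Real.exp_pos _).le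
    _ = ((a+1)*(b+1)^4*2*20^5) * Real.exp (-(1/4) * t^2) := by
        rw [mul_assoc, ← Real.exp_add]
        congr 2
        ring


lemma outer_integrable {φ ψ : E → ℂ} {Cφ Cψ : ℝ}
    (hφc : Continuous φ) (hψc : Continuous ψ) (hφ : PB φ Cφ) (hψ : PB ψ Cψ) (v : E) :
    Integrable (fun vs =>
      ∫ ω : S, qint (fun u => ((Mx u : ℝ) : ℂ) * φ u) (fun u => ((Mx u : ℝ) : ℂ) * ψ u)
        v vs ω ∂sphMeas) := by
  have hFc : Continuous fun u => ((Mx u : ℝ) : ℂ) * φ u :=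
    (Complex.continuous_ofReal.comp Mx_cont).mul hφc
  have hGc : Continuous fun u => ((Mx u : ℝ) : ℂ) * ψ u :=
    (Complex.continuous_ofReal.comp Mx_cont).mul hψc
  set c0 : ℝ := (2 * Real.pi) ^ (-(3:ℝ)/2) with hc0
  have hc0p : 0 < c0 := by rw [hc0]; positivity
  set A : ℝ := (sphMeas Set.univ).toReal with hA
  have hA0 : 0 ≤ A := ENNReal.toReal_nonneg
  set K : ℝ := (2 * Cφ * Cψ * Mx v * c0 * A) * ((‖v‖+1) * ((1+‖v‖^2)+1)^4 * 2 * 20^5) with hK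
  refine Integrable.mono' (g := fun vs => K * Real.exp (-(1/4) * ‖vs‖^2))
    (integrable_gaussE.const_mul K) (meas_outer hFc hGc v) (ae_of_all _ fun vs => ?_)
  have hb : ‖∫ ω : S, qint (fun u => ((Mx u : ℝ) : ℂ) * φ u) (fun u => ((Mx u : ℝ) : ℂ) * ψ u)
      v vs ω ∂sphMeas‖ ≤
      (2 * Cφ * Cψ * (Mx v * Mx vs) * ((‖v‖ + ‖vs‖) * (1 + ‖v‖^2 + ‖vs‖^2)^4)) * A :=
    norm_integral_le_of_norm_le_const (ae_of_all _ fun ω => qint_bound hφ hψ v vs ω)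
  refine hb.trans ?_
  have hM : Mx vs = c0 * Real.exp (-‖vs‖^2/2) := rfl
  have hp := poly_exp_bound ‖v‖ (1+‖v‖^2) (norm_nonneg v) (by positivity) ‖vs‖ (norm_nonneg vs)
  have h1 : 2 * Cφ * Cψ * (Mx v * Mx vs) * ((‖v‖ + ‖vs‖) * (1 + ‖v‖^2 + ‖vs‖^2)^4) * A
      = (2 * Cφ * Cψ * Mx v * c0 * A) *
        ((‖v‖ + ‖vs‖) * ((1+‖v‖^2) + ‖vs‖^2)^4 * Real.exp (-‖vs‖^2/2)) := by
    rw [hM]; ring_nf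
  rw [h1]
  have hCnn : 0 ≤ 2 * Cφ * Cψ * Mx v * c0 * A := by
    have := hφ.1; have := hψ.1; have := (Mx_pos v).le; positivity
  calc (2 * Cφ * Cψ * Mx v * c0 * A) *
        ((‖v‖ + ‖vs‖) * ((1+‖v‖^2) + ‖vs‖^2)^4 * Real.exp (-‖vs‖^2/2))
      ≤ (2 * Cφ * Cψ * Mx v * c0 * A) *
        (((‖v‖+1) * ((1+‖v‖^2)+1)^4 * 2 * 20^5) * Real.exp (-(1/4) * ‖vs‖^2)) :=
        mul_le_mul_of_nonneg_left hp hCnn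
    _ = K * Real.exp (-(1/4) * ‖vs‖^2) := by rw [hK]; ring


lemma Qsum4 (v : E) (φ₁ ψ₁ φ₂ ψ₂ φ₃ ψ₃ φ₄ ψ₄ : E → ℂ) {C₁ C₂ C₃ C₄ D₁ D₂ D₃ D₄ : ℝ}
    (hc₁ : Continuous φ₁) (hd₁ : Continuous ψ₁) (hc₂ : Continuous φ₂) (hd₂ : Continuous ψ₂)
    (hc₃ : Continuous φ₃) (hd₃ : Continuous ψ₃) (hc₄ : Continuous φ₄) (hd₄ : Continuous ψ₄)
    (hb₁ : PB φ₁ C₁) (he₁ : PB ψ₁ D₁) (hb₂ : PB φ₂ C₂) (he₂ : PB ψ₂ D₂)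
    (hb₃ : PB φ₃ C₃) (he₃ : PB ψ₃ D₃) (hb₄ : PB φ₄ C₄) (he₄ : PB ψ₄ D₄)
    (hz : ∀ vs ω : E, ‖ω‖ = 1 →
      φ₁ (vp v vs ω) * ψ₁ (wp v vs ω) - φ₁ v * ψ₁ vs
      + (φ₂ (vp v vs ω) * ψ₂ (wp v vs ω) - φ₂ v * ψ₂ vs)
      + (φ₃ (vp v vs ω) * ψ₃ (wp v vs ω) - φ₃ v * ψ₃ vs)
      + (φ₄ (vp v vs ω) * ψ₄ (wp v vs ω) - φ₄ v * ψ₄ vs) = 0) :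
    Qop (fun u => ((Mx u : ℝ) : ℂ) * φ₁ u) (fun u => ((Mx u : ℝ) : ℂ) * ψ₁ u) v
    + Qop (fun u => ((Mx u : ℝ) : ℂ) * φ₂ u) (fun u => ((Mx u : ℝ) : ℂ) * ψ₂ u) v
    + Qop (fun u => ((Mx u : ℝ) : ℂ) * φ₃ u) (fun u => ((Mx u : ℝ) : ℂ) * ψ₃ u) v
    + Qop (fun u => ((Mx u : ℝ) : ℂ) * φ₄ u) (fun u => ((Mx u : ℝ) : ℂ) * ψ₄ u) v = 0 := by
  have hM : Continuous fun u : E => ((Mx u : ℝ) : ℂ) := Complex.continuous_ofReal.comp Mx_cont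
  have hF₁ : Continuous fun u => ((Mx u : ℝ) : ℂ) * φ₁ u := hM.mul hc₁
  have hG₁ : Continuous fun u => ((Mx u : ℝ) : ℂ) * ψ₁ u := hM.mul hd₁
  have hF₂ : Continuous fun u => ((Mx u : ℝ) : ℂ) * φ₂ u := hM.mul hc₂
  have hG₂ : Continuous fun u => ((Mx u : ℝ) : ℂ) * ψ₂ u := hM.mul hd₂
  have hF₃ : Continuous fun u => ((Mx u : ℝ) : ℂ) * φ₃ u := hM.mul hc₃
  have hG₃ : Continuous fun u => ((Mx u : ℝ) : ℂ) * ψ₃ u := hM.mul hd₃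
  have hF₄ : Continuous fun u => ((Mx u : ℝ) : ℂ) * φ₄ u := hM.mul hc₄
  have hG₄ : Continuous fun u => ((Mx u : ℝ) : ℂ) * ψ₄ u := hM.mul hd₄
  have o₁ := outer_integrable hc₁ hd₁ hb₁ he₁ v
  have o₂ := outer_integrable hc₂ hd₂ hb₂ he₂ v
  have o₃ := outer_integrable hc₃ hd₃ hb₃ he₃ v
  have o₄ := outer_integrable hc₄ hd₄ hb₄ he₄ v
  have o12 : Integrable (fun vs =>
      (∫ ω : S, qint (fun u => ((Mx u : ℝ) : ℂ) * φ₁ u) (fun u => ((Mx u : ℝ) : ℂ) * ψ₁ u) v vs ω ∂sphMeas)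
      + (∫ ω : S, qint (fun u => ((Mx u : ℝ) : ℂ) * φ₂ u) (fun u => ((Mx u : ℝ) : ℂ) * ψ₂ u) v vs ω ∂sphMeas)) volume := o₁.add o₂
  have o123 : Integrable (fun vs =>
      (∫ ω : S, qint (fun u => ((Mx u : ℝ) : ℂ) * φ₁ u) (fun u => ((Mx u : ℝ) : ℂ) * ψ₁ u) v vs ω ∂sphMeas)
      + (∫ ω : S, qint (fun u => ((Mx u : ℝ) : ℂ) * φ₂ u) (fun u => ((Mx u : ℝ) : ℂ) * ψ₂ u) v vs ω ∂sphMeas)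
      + (∫ ω : S, qint (fun u => ((Mx u : ℝ) : ℂ) * φ₃ u) (fun u => ((Mx u : ℝ) : ℂ) * ψ₃ u) v vs ω ∂sphMeas)) volume := o12.add o₃
  rw [Qop_eq, Qop_eq, Qop_eq, Qop_eq, ← integral_add o₁ o₂, ← integral_add o12 o₃,
    ← integral_add o123 o₄]
  have h0 : ∀ vs : E,
      ((∫ ω : S, qint (fun u => ((Mx u : ℝ) : ℂ) * φ₁ u) (fun u => ((Mx u : ℝ) : ℂ) * ψ₁ u) v vs ω ∂sphMeas)
      + (∫ ω : S, qint (fun u => ((Mx u : ℝ) : ℂ) * φ₂ u) (fun u => ((Mx u : ℝ) : ℂ) * ψ₂ u) v vs ω ∂sphMeas)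
      + (∫ ω : S, qint (fun u => ((Mx u : ℝ) : ℂ) * φ₃ u) (fun u => ((Mx u : ℝ) : ℂ) * ψ₃ u) v vs ω ∂sphMeas)
      + (∫ ω : S, qint (fun u => ((Mx u : ℝ) : ℂ) * φ₄ u) (fun u => ((Mx u : ℝ) : ℂ) * ψ₄ u) v vs ω ∂sphMeas))
      = (fun _ : E => (0:ℂ)) vs := by
    intro vs
    have i₁ := qint_int_sphere hF₁ hG₁ v vs
    have i₂ := qint_int_sphere hF₂ hG₂ v vs
    have i₃ := qint_int_sphere hF₃ hG₃ v vs
    have i₄ := qint_int_sphere hF₄ hG₄ v vs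
    have i12 : Integrable (fun ω : S =>
        qint (fun u => ((Mx u : ℝ) : ℂ) * φ₁ u) (fun u => ((Mx u : ℝ) : ℂ) * ψ₁ u) v vs ω
        + qint (fun u => ((Mx u : ℝ) : ℂ) * φ₂ u) (fun u => ((Mx u : ℝ) : ℂ) * ψ₂ u) v vs ω) sphMeas := i₁.add i₂
    have i123 : Integrable (fun ω : S =>
        qint (fun u => ((Mx u : ℝ) : ℂ) * φ₁ u) (fun u => ((Mx u : ℝ) : ℂ) * ψ₁ u) v vs ω
        + qint (fun u => ((Mx u : ℝ) : ℂ) * φ₂ u) (fun u => ((Mx u : ℝ) : ℂ) * ψ₂ u) v vs ω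
        + qint (fun u => ((Mx u : ℝ) : ℂ) * φ₃ u) (fun u => ((Mx u : ℝ) : ℂ) * ψ₃ u) v vs ω) sphMeas := i12.add i₃
    rw [← integral_add i₁ i₂, ← integral_add i12 i₃, ← integral_add i123 i₄]
    have hz' : ∀ ω : S,
        (qint (fun u => ((Mx u : ℝ) : ℂ) * φ₁ u) (fun u => ((Mx u : ℝ) : ℂ) * ψ₁ u) v vs ω
        + qint (fun u => ((Mx u : ℝ) : ℂ) * φ₂ u) (fun u => ((Mx u : ℝ) : ℂ) * ψ₂ u) v vs ω
        + qint (fun u => ((Mx u : ℝ) : ℂ) * φ₃ u) (fun u => ((Mx u : ℝ) : ℂ) * ψ₃ u) v vs ω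
        + qint (fun u => ((Mx u : ℝ) : ℂ) * φ₄ u) (fun u => ((Mx u : ℝ) : ℂ) * ψ₄ u) v vs ω)
        = (fun _ : S => (0:ℂ)) ω := by
      intro ω
      have hω : ‖(ω : E)‖ = 1 := sphere_norm ω
      have hMm : ((Mx (vp v vs (ω:E)) : ℝ) : ℂ) * ((Mx (wp v vs (ω:E)) : ℝ) : ℂ)
          = ((Mx v : ℝ) : ℂ) * ((Mx vs : ℝ) : ℂ) := by
        exact_mod_cast congrArg (fun x : ℝ => (x : ℂ)) (Mx_mul v vs (ω:E) hω)
      have hzz := hz vs (ω : E) hω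
      unfold qint
      linear_combination ((|cI v vs (ω:E)| : ℝ) : ℂ) * (((Mx v : ℝ) : ℂ) * ((Mx vs : ℝ) : ℂ)) * hzz
        + ((|cI v vs (ω:E)| : ℝ) : ℂ) *
          (φ₁ (vp v vs (ω:E)) * ψ₁ (wp v vs (ω:E)) + φ₂ (vp v vs (ω:E)) * ψ₂ (wp v vs (ω:E))
           + φ₃ (vp v vs (ω:E)) * ψ₃ (wp v vs (ω:E)) + φ₄ (vp v vs (ω:E)) * ψ₄ (wp v vs (ω:E))) * hMm
    rw [integral_congr_ae (ae_of_all _ hz'), integral_zero]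
  rw [integral_congr_ae (ae_of_all _ h0), integral_zero]


lemma chi0_mul_mul (x : ℂ) (u : E) : chi0 u * (x * chi0 u) = ((Mx u : ℝ) : ℂ) * x := by
  rw [show chi0 u * (x * chi0 u) = chi0 u * chi0 u * x by ring, chi0_sq]

/-- the collision-invariant polynomials corresponding to `chiB` -/
def rB (k : Fin 5) (u : E) : ℂ :=
  if k.val = 0 then 1
  else if k.val = 4 then (((‖u‖^2 - 3) / Real.sqrt 6 : ℝ) : ℂ)
  else ((u ⟨(k.val - 1) % 3, by omega⟩ : ℝ) : ℂ)

lemma sqrtMx_sq (u : E) : ((Real.sqrt (Mx u) : ℝ) : ℂ) * ((Real.sqrt (Mx u) : ℝ) : ℂ)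
    = ((Mx u : ℝ) : ℂ) := chi0_sq u

lemma rB_cont (k : Fin 5) : Continuous (rB k) := by
  unfold rB
  split_ifs <;> fun_prop

lemma rB_PB (k : Fin 5) : PB (rB k) 3 := by
  have h6 : (1:ℝ) ≤ Real.sqrt 6 := by
    rw [show (1:ℝ) = Real.sqrt 1 by simp]
    exact Real.sqrt_le_sqrt (by norm_num)
  constructor
  · norm_num
  intro u
  have hn : (0:ℝ) ≤ ‖u‖ := norm_nonneg u
  fin_cases k <;> simp only [rB] <;> norm_num
  · nlinarith [sq_nonneg ‖u‖]
  · exact le_trans (coordAbs u _) (by nlinarith [sq_nonneg (‖u‖-1), sq_nonneg (‖u‖^2), norm_nonneg u])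
  · exact le_trans (coordAbs u _) (by nlinarith [sq_nonneg (‖u‖-1), sq_nonneg (‖u‖^2), norm_nonneg u])
  · exact le_trans (coordAbs u _) (by nlinarith [sq_nonneg (‖u‖-1), sq_nonneg (‖u‖^2), norm_nonneg u])
  · rw [show ((‖u‖:ℂ)^2 - 3) = (((‖u‖^2 - 3 : ℝ)) : ℂ) by push_cast; ring,
      Complex.norm_real, Real.norm_eq_abs, abs_of_nonneg (Real.sqrt_nonneg 6)]
    have h1 : |‖u‖^2 - 3| ≤ ‖u‖^2 + 3 := by
      rw [abs_le]; constructor <;> nlinarith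
    have h2 : |‖u‖^2 - 3| / Real.sqrt 6 ≤ |‖u‖^2 - 3| :=
      div_le_self (abs_nonneg _) h6
    nlinarith [sq_nonneg ‖u‖]

lemma PB_one : PB (fun _ : E => (1:ℂ)) 1 := by
  refine ⟨by norm_num, fun u => ?_⟩
  simp only [norm_one]
  nlinarith [sq_nonneg ‖u‖, norm_nonneg u, sq_nonneg (‖u‖^2)]

lemma rB_inv (k : Fin 5) (v vs ω : E) (hω : ‖ω‖ = 1) :
    rB k (vp v vs ω) + rB k (wp v vs ω) = rB k v + rB k vs := by
  have hnC : ((‖vp v vs ω‖ : ℝ) : ℂ)^2 + ((‖wp v vs ω‖ : ℝ) : ℂ)^2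
      = ((‖v‖ : ℝ) : ℂ)^2 + ((‖vs‖ : ℝ) : ℂ)^2 := by exact_mod_cast nsq v vs ω hω
  fin_cases k <;> simp only [rB] <;> norm_num
  · exact_mod_cast coord_add v vs ω _
  · exact_mod_cast coord_add v vs ω _
  · exact_mod_cast coord_add v vs ω _
  · push_cast
    linear_combination (1 / (Real.sqrt 6 : ℂ)) * hnC

lemma chi0_mul_chiB (k : Fin 5) (u : E) :
    chi0 u * chiB k u = ((Mx u : ℝ) : ℂ) * rB k u := by
  fin_cases k <;> simp only [chiB, rB] <;> norm_num
  · rw [chi0_sq]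
  · unfold chi0; push_cast
    linear_combination ((u 0 : ℝ) : ℂ) * sqrtMx_sq u
  · unfold chi0; push_cast
    linear_combination ((u 1 : ℝ) : ℂ) * sqrtMx_sq u
  · unfold chi0; push_cast
    linear_combination ((u 2 : ℝ) : ℂ) * sqrtMx_sq u
  · unfold chi0; push_cast
    linear_combination (((‖u‖ : ℂ)^2 - 3) / (Real.sqrt 6 : ℂ)) * sqrtMx_sq u

lemma main_case (v : E) (a b : E → ℂ) (pR : E → ℝ) {Ca Cb Cp : ℝ}
    (hac : Continuous a) (hbc : Continuous b) (hPa : PB a Ca) (hPb : PB b Cb)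
    (hpc : Continuous fun u : E => ((pR u : ℝ) : ℂ))
    (hPp : PB (fun u => ((pR u : ℝ) : ℂ)) Cp)
    (hprod : ∀ u, ((pR u : ℝ) : ℂ) = a u * b u)
    (hainv : ∀ vs ω : E, ‖ω‖ = 1 → a (vp v vs ω) + a (wp v vs ω) = a v + a vs)
    (hbinv : ∀ vs ω : E, ‖ω‖ = 1 → b (vp v vs ω) + b (wp v vs ω) = b v + b vs) :
    Gstar (fun u => a u * chi0 u) (fun u => b u * chi0 u) v
      = -(1/2 : ℂ) * Lop (P1 (fun u => ((pR u : ℝ) : ℂ) * chi0 u)) v := by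
  obtain ⟨ck, hck⟩ : ∃ c : Fin 5 → ℂ,
      c = fun k => ∫ u, ((pR u : ℝ) : ℂ) * chi0 u * (starRingEnd ℂ) (chiB k u) := ⟨_, rfl⟩
  obtain ⟨sf, hsf⟩ : ∃ s : E → ℂ, s = fun u => ∑ k : Fin 5, ck k * rB k u := ⟨_, rfl⟩
  have hsc : Continuous sf := by
    rw [hsf]
    exact continuous_finset_sum _ fun k _ => continuous_const.mul (rB_cont k)
  have hckn : (0:ℝ) ≤ ∑ k : Fin 5, ‖ck k‖ :=
    Finset.sum_nonneg fun k _ => norm_nonneg _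
  have hsPB : PB sf (3 * ∑ k : Fin 5, ‖ck k‖) := by
    refine ⟨by positivity, fun u => ?_⟩
    rw [hsf]
    refine (norm_sum_le _ _).trans ?_
    refine (Finset.sum_le_sum (fun k (_ : k ∈ Finset.univ) => ?_)).trans
      (le_of_eq (?_ : ∑ k : Fin 5, ‖ck k‖ * (3 * (1+‖u‖^2)^2) = _))
    · rw [norm_mul]
      exact mul_le_mul_of_nonneg_left ((rB_PB k).2 u) (norm_nonneg _)
    · rw [← Finset.sum_mul]; ring
  have hψc : Continuous fun u => ((pR u : ℝ) : ℂ) - sf u := hpc.sub hsc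
  have hψPB : PB (fun u => ((pR u : ℝ) : ℂ) - sf u) (Cp + 3 * ∑ k : Fin 5, ‖ck k‖) := by
    refine ⟨add_nonneg hPp.1 (by positivity), fun u => ?_⟩
    exact (norm_sub_le _ _).trans ((add_le_add (hPp.2 u) (hsPB.2 u)).trans (le_of_eq (by ring)))
  have hsinv : ∀ vs ω : E, ‖ω‖ = 1 → sf (vp v vs ω) + sf (wp v vs ω) = sf v + sf vs := by
    intro vs ω hω
    rw [hsf]
    simp only
    rw [← Finset.sum_add_distrib, ← Finset.sum_add_distrib]
    exact Finset.sum_congr rfl fun k _ => by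
      linear_combination (ck k) * rB_inv k v vs ω hω
  have hz : ∀ vs ω : E, ‖ω‖ = 1 →
      a (vp v vs ω) * b (wp v vs ω) - a v * b vs
      + (b (vp v vs ω) * a (wp v vs ω) - b v * a vs)
      + ((fun _ : E => (1:ℂ)) (vp v vs ω) * ((fun u => ((pR u : ℝ) : ℂ) - sf u) (wp v vs ω))
          - (fun _ : E => (1:ℂ)) v * ((fun u => ((pR u : ℝ) : ℂ) - sf u) vs))
      + ((fun u => ((pR u : ℝ) : ℂ) - sf u) (vp v vs ω) * (fun _ : E => (1:ℂ)) (wp v vs ω)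
          - (fun u => ((pR u : ℝ) : ℂ) - sf u) v * (fun _ : E => (1:ℂ)) vs) = 0 := by
    intro vs ω hω
    simp only [hprod, one_mul, mul_one]
    linear_combination (b (wp v vs ω) + b (vp v vs ω)) * hainv vs ω hω
      + (a v + a vs) * hbinv vs ω hω - hsinv vs ω hω
  have hQ := Qsum4 v a b b a (fun _ => (1:ℂ)) (fun u => ((pR u : ℝ) : ℂ) - sf u)
      (fun u => ((pR u : ℝ) : ℂ) - sf u) (fun _ => (1:ℂ))
      hac hbc hbc hac continuous_const hψc hψc continuous_const
      hPa hPb hPb hPa PB_one hψPB hψPB PB_one hz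
  have eF : (fun u => chi0 u * (a u * chi0 u)) = fun u => ((Mx u : ℝ) : ℂ) * a u :=
    funext fun u => chi0_mul_mul (a u) u
  have eG : (fun u => chi0 u * (b u * chi0 u)) = fun u => ((Mx u : ℝ) : ℂ) * b u :=
    funext fun u => chi0_mul_mul (b u) u
  have eM : (fun u : E => ((Mx u : ℝ) : ℂ))
      = fun u => ((Mx u : ℝ) : ℂ) * (fun _ : E => (1:ℂ)) u := funext fun u => (mul_one _).symm
  have eP : (fun u => chi0 u * P1 (fun u => ((pR u : ℝ) : ℂ) * chi0 u) u)
      = fun u => ((Mx u : ℝ) : ℂ) * ((fun u => ((pR u : ℝ) : ℂ) - sf u) u) := by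
    funext u
    simp only
    unfold P1 P0
    rw [mul_sub, chi0_mul_mul, Finset.mul_sum]
    have hterm : ∀ k : Fin 5,
        chi0 u * ((∫ x, ((pR x : ℝ) : ℂ) * chi0 x * (starRingEnd ℂ) (chiB k x)) * chiB k u)
          = ck k * (((Mx u : ℝ) : ℂ) * rB k u) := by
      intro k
      rw [hck]
      calc chi0 u * ((∫ x, ((pR x : ℝ) : ℂ) * chi0 x * (starRingEnd ℂ) (chiB k x)) * chiB k u)
          = (∫ x, ((pR x : ℝ) : ℂ) * chi0 x * (starRingEnd ℂ) (chiB k x)) * (chi0 u * chiB k u) := by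
            ring
        _ = _ := by rw [chi0_mul_chiB]
    rw [Finset.sum_congr rfl fun k _ => hterm k, hsf]
    simp only
    rw [mul_sub, Finset.mul_sum]
    congr 1
    exact Finset.sum_congr rfl fun k _ => by ring
  unfold Gstar Gam Lop
  simp only
  rw [eF, eG, eM, eP]
  linear_combination (((Real.sqrt (Mx v) : ℝ) : ℂ)⁻¹ / 2) * hQ

lemma PB_coord (l : Fin 3) : PB (fun u => ((u l : ℝ) : ℂ)) 1 := by
  refine ⟨zero_le_one, fun u => ?_⟩
  rw [Complex.norm_real, Real.norm_eq_abs]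
  exact le_trans (coordAbs u l)
    (by nlinarith [sq_nonneg (‖u‖-1), sq_nonneg (‖u‖^2), norm_nonneg u])

lemma PB_nsq : PB (fun u => ((‖u‖^2 : ℝ) : ℂ)) 1 := by
  refine ⟨zero_le_one, fun u => ?_⟩
  rw [Complex.norm_real, Real.norm_eq_abs, abs_of_nonneg (by positivity)]
  nlinarith [sq_nonneg ‖u‖, sq_nonneg (‖u‖^2)]

lemma coord_inv (v : E) (l : Fin 3) : ∀ vs ω : E, ‖ω‖ = 1 →
    (fun u : E => ((u l : ℝ) : ℂ)) (vp v vs ω) + (fun u : E => ((u l : ℝ) : ℂ)) (wp v vs ω)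
      = (fun u : E => ((u l : ℝ) : ℂ)) v + (fun u : E => ((u l : ℝ) : ℂ)) vs := by
  intro vs ω hω
  simp only
  exact_mod_cast coord_add v vs ω l

lemma nsq_inv (v : E) : ∀ vs ω : E, ‖ω‖ = 1 →
    (fun u : E => ((‖u‖^2 : ℝ) : ℂ)) (vp v vs ω) + (fun u : E => ((‖u‖^2 : ℝ) : ℂ)) (wp v vs ω)
      = (fun u : E => ((‖u‖^2 : ℝ) : ℂ)) v + (fun u : E => ((‖u‖^2 : ℝ) : ℂ)) vs := by
  intro vs ω hω
  simp only
  exact_mod_cast nsq v vs ω hω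

lemma PB_p1 (i j : Fin 3) : PB (fun u => ((u i * u j : ℝ) : ℂ)) 1 := by
  refine ⟨zero_le_one, fun u => ?_⟩
  rw [Complex.norm_real, Real.norm_eq_abs, abs_mul]
  have h1 : |u i| * |u j| ≤ ‖u‖ * ‖u‖ :=
    mul_le_mul (coordAbs u i) (coordAbs u j) (abs_nonneg _) (norm_nonneg _)
  nlinarith [sq_nonneg ‖u‖, norm_nonneg u]

lemma PB_p2 (i : Fin 3) : PB (fun u => ((u i * ‖u‖^2 : ℝ) : ℂ)) 1 := by
  refine ⟨zero_le_one, fun u => ?_⟩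
  rw [Complex.norm_real, Real.norm_eq_abs, abs_mul, abs_of_nonneg (by positivity : (0:ℝ) ≤ ‖u‖^2)]
  have h1 : |u i| * ‖u‖^2 ≤ ‖u‖ * ‖u‖^2 :=
    mul_le_mul_of_nonneg_right (coordAbs u i) (by positivity)
  nlinarith [sq_nonneg (‖u‖^2 - ‖u‖), sq_nonneg ‖u‖, norm_nonneg u]

lemma PB_p3 : PB (fun u => ((‖u‖^4 : ℝ) : ℂ)) 1 := by
  refine ⟨zero_le_one, fun u => ?_⟩
  rw [Complex.norm_real, Real.norm_eq_abs, abs_of_nonneg (by positivity)]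
  nlinarith [sq_nonneg ‖u‖, sq_nonneg (‖u‖^2)]

end Stmt19Aux

/- STATEMENT 19: for all `i, j ∈ {1,2,3}` and all `v ∈ ℝ³`:
`Γ_*(v_i χ₀, v_j χ₀) = −(1/2) L P₁(v_i v_j χ₀)`,
`Γ_*(v_i χ₀, |v|² χ₀) = −(1/2) L P₁(v_i |v|² χ₀)`,
`Γ_*(|v|² χ₀, |v|² χ₀) = −(1/2) L P₁(|v|⁴ χ₀)`. -/
open Stmt19Aux

theorem stmt19 (i j : Fin 3) (v : EuclideanSpace ℝ (Fin 3)) :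
    Gstar (fun u => ((u i : ℝ) : ℂ) * chi0 u) (fun u => ((u j : ℝ) : ℂ) * chi0 u) v
        = -(1/2 : ℂ) * Lop (P1 (fun u => ((u i * u j : ℝ) : ℂ) * chi0 u)) v ∧
    Gstar (fun u => ((u i : ℝ) : ℂ) * chi0 u) (fun u => ((‖u‖^2 : ℝ) : ℂ) * chi0 u) v
        = -(1/2 : ℂ) * Lop (P1 (fun u => ((u i * ‖u‖^2 : ℝ) : ℂ) * chi0 u)) v ∧
    Gstar (fun u => ((‖u‖^2 : ℝ) : ℂ) * chi0 u) (fun u => ((‖u‖^2 : ℝ) : ℂ) * chi0 u) v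
        = -(1/2 : ℂ) * Lop (P1 (fun u => ((‖u‖^4 : ℝ) : ℂ) * chi0 u)) v := by
  have hC : ∀ l : Fin 3, Continuous fun u : E => ((u l : ℝ) : ℂ) := fun l => by fun_prop
  have hN : Continuous fun u : E => ((‖u‖^2 : ℝ) : ℂ) := by fun_prop
  refine ⟨?_, ?_, ?_⟩
  · exact main_case v (fun u => ((u i : ℝ) : ℂ)) (fun u => ((u j : ℝ) : ℂ))
      (fun u => u i * u j) (hC i) (hC j) (PB_coord i) (PB_coord j)
      (by fun_prop) (PB_p1 i j) (fun u => by push_cast; ring)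
      (coord_inv v i) (coord_inv v j)
  · exact main_case v (fun u => ((u i : ℝ) : ℂ)) (fun u => ((‖u‖^2 : ℝ) : ℂ))
      (fun u => u i * ‖u‖^2) (hC i) hN (PB_coord i) PB_nsq
      (by fun_prop) (PB_p2 i) (fun u => by push_cast; ring)
      (coord_inv v i) (nsq_inv v)
  · exact main_case v (fun u => ((‖u‖^2 : ℝ) : ℂ)) (fun u => ((‖u‖^2 : ℝ) : ℂ))
      (fun u => ‖u‖^4) hN hN PB_nsq PB_nsq
      (by fun_prop) PB_p3 (fun u => by push_cast; ring)
      (nsq_inv v) (nsq_inv v)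


end
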